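/- Define $r(x) = \frac{3 - \sqrt{1+8(1-2x)^2}}{8}$ and $\psi(x) = H(2r(x)) + 4r(x) + 2(1-2r(x)) H\!\left(\frac{x - r(x)}{1-2r(x)}\right) - 2H(x)$ for $x \in (0, 1/2]$, where $H(p) = -p\log_2 p - (1-p)\log_2(1-p)$ is the binary entropy. Then $\psi$ is strictly concave on $(0, 1/2]$: $\psi''(x) < 0$ for all $0 < x \le 1/2$. In fact $\psi''(x) = -\frac{16}{\ln 2 \cdot (3-8r(x))(3-4r(x))}$. -/

import Mathlib

/-- Binary entropy `H(p) = -p log₂ p - (1-p) log₂ (1-p)`. -/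
noncomputable def H (p : ℝ) : ℝ := -p * Real.logb 2 p - (1 - p) * Real.logb 2 (1 - p)

/-- `r(x) = (3 - √(1 + 8(1-2x)²)) / 8`. -/
noncomputable def r (x : ℝ) : ℝ := (3 - Real.sqrt (1 + 8 * (1 - 2 * x) ^ 2)) / 8

/-- `ψ(x) = H(2r) + 4r + 2(1-2r) H((x-r)/(1-2r)) - 2H(x)`. -/
noncomputable def psi (x : ℝ) : ℝ :=
  H (2 * r x) + 4 * r x + 2 * (1 - 2 * r x) * H ((x - r x) / (1 - 2 * r x)) - 2 * H x

lemma hasDerivAt_H {p : ℝ} (h0 : 0 < p) (h1 : p < 1) :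
    HasDerivAt H ((Real.log (1 - p) - Real.log p) / Real.log 2) p := by
  have h1p : (0:ℝ) < 1 - p := by linarith
  have d1 := Real.hasDerivAt_mul_log (ne_of_gt h0)
  have din : HasDerivAt (fun q : ℝ => 1 - q) (-1) p := (hasDerivAt_id p).const_sub 1
  have d2 : HasDerivAt (fun q : ℝ => (1 - q) * Real.log (1 - q))
      ((Real.log (1 - p) + 1) * (-1)) p :=
    (Real.hasDerivAt_mul_log (ne_of_gt h1p)).comp p din
  have hHeq : H = fun q : ℝ =>
      (-(q * Real.log q) - (1 - q) * Real.log (1 - q)) / Real.log 2 := by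
    funext q; simp only [H, Real.logb]; ring
  rw [hHeq]
  have := ((d1.neg).sub d2).div_const (Real.log 2)
  refine this.congr_deriv ?_
  ring

lemma r_facts {x : ℝ} (h0 : 0 < x) (h1 : x < 1) :
    0 < r x ∧ r x ≤ 1/4 ∧ 4*(r x)^2 - 3*(r x) + 2*x*(1-x) = 0 ∧ r x < x ∧ x + r x < 1 := by
  have hpos : (0:ℝ) < 1 + 8 * (1 - 2*x)^2 := by positivity
  set s := Real.sqrt (1 + 8 * (1 - 2 * x) ^ 2) with hs
  have hs0 : 0 ≤ s := Real.sqrt_nonneg _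
  have hs2 : s ^ 2 = 1 + 8 * (1 - 2*x)^2 := Real.sq_sqrt (le_of_lt hpos)
  have hx2 : (1 - 2*x)^2 < 1 := by nlinarith
  have hs1 : 1 ≤ s := by nlinarith
  have hs3 : s < 3 := by nlinarith
  have hr : r x = (3 - s) / 8 := rfl
  have hq : 4*(r x)^2 - 3*(r x) + 2*x*(1-x) = 0 := by
    rw [hr]; nlinarith [hs2]
  have hrpos : 0 < r x := by rw [hr]; linarith
  have hr4 : r x ≤ 1/4 := by rw [hr]; linarith
  have hprod : 2*(x - r x)*(1 - x - r x) = (r x)*(1 - 2*(r x)) := by linear_combination hq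
  have hsum : 0 < 1 - 2 * r x := by linarith
  constructor; · exact hrpos
  constructor; · exact hr4
  constructor; · exact hq
  constructor
  · nlinarith [mul_pos hrpos hsum]
  · nlinarith [mul_pos hrpos hsum]

lemma hasDerivAt_r {x : ℝ} (h0 : 0 < x) (h1 : x < 1) :
    HasDerivAt r ((2 - 4*x) / (3 - 8 * r x)) x := by
  have hpos : (0:ℝ) < 1 + 8 * (1 - 2*x)^2 := by positivity
  have hin : HasDerivAt (fun y : ℝ => 1 + 8 * (1 - 2 * y) ^ 2) (-32 * (1 - 2*x)) x := by
    have h1 : HasDerivAt (fun y : ℝ => 1 - 2 * y) (-2) x := by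
      simpa using ((hasDerivAt_id x).const_mul 2).const_sub 1
    have := ((h1.pow 2).const_mul 8).const_add 1
    refine this.congr_deriv ?_; ring
  have hsq : HasDerivAt (fun y : ℝ => Real.sqrt (1 + 8 * (1 - 2 * y) ^ 2))
      ((-32 * (1 - 2*x)) / (2 * Real.sqrt (1 + 8 * (1 - 2*x)^2))) x :=
    hin.sqrt (ne_of_gt hpos)
  have hR : HasDerivAt r
      ((0 - (-32 * (1 - 2*x)) / (2 * Real.sqrt (1 + 8 * (1 - 2*x)^2))) / 8) x :=
    ((hasDerivAt_const x (3:ℝ)).sub hsq).div_const 8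
  have hsval : Real.sqrt (1 + 8 * (1 - 2*x)^2) = 3 - 8 * r x := by
    show _ = 3 - 8 * ((3 - Real.sqrt (1 + 8 * (1 - 2 * x) ^ 2)) / 8); ring
  have hsne : (0:ℝ) < Real.sqrt (1 + 8 * (1 - 2*x)^2) := Real.sqrt_pos.mpr hpos
  convert hR using 1
  rw [hsval] at hsne ⊢
  field_simp
  ring

noncomputable def phi (x : ℝ) : ℝ := 2 / Real.log 2 *
  (Real.log (1 - x - r x) - Real.log (x - r x) - Real.log (1 - x) + Real.log x)

lemma hasDerivAt_psi {x : ℝ} (h0 : 0 < x) (h1 : x < 1) : HasDerivAt psi (phi x) x := by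
  obtain ⟨hR0, hR4, hq, hRx, hRx1⟩ := r_facts h0 h1
  have hL : Real.log 2 ≠ 0 := ne_of_gt (Real.log_pos one_lt_two)
  set R := r x with hRdef
  have ha : 0 < x - R := by linarith
  have hb : 0 < 1 - x - R := by linarith
  have hc : 0 < 1 - 2 * R := by linarith
  have hr' := hasDerivAt_r h0 h1
  rw [← hRdef] at hr'
  set r' := (2 - 4*x) / (3 - 8 * R) with hr'def
  have h2r : HasDerivAt (fun y => 2 * r y) (2 * r') x := hr'.const_mul 2
  have hH2r : HasDerivAt (fun y => H (2 * r y))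
      (((Real.log (1 - 2*R) - Real.log (2*R)) / Real.log 2) * (2 * r')) x := by
    have := (hasDerivAt_H (by linarith : (0:ℝ) < 2*R) (by linarith : 2*R < 1)).comp x h2r
    exact this
  have hnum : HasDerivAt (fun y => y - r y) (1 - r') x := (hasDerivAt_id x).sub hr'
  have hden : HasDerivAt (fun y => 1 - 2 * r y) (-(2 * r')) x := h2r.const_sub 1
  have hu : HasDerivAt (fun y => (y - r y) / (1 - 2 * r y))
      (((1 - r') * (1 - 2*R) - (x - R) * (-(2 * r'))) / (1 - 2*R)^2) x :=
    hnum.div hden (ne_of_gt hc)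
  have hu0 : 0 < (x - R) / (1 - 2*R) := div_pos ha hc
  have hu1 : (x - R) / (1 - 2*R) < 1 := by
    rw [div_lt_one hc]; linarith
  have hHu : HasDerivAt (fun y => H ((y - r y) / (1 - 2 * r y)))
      (((Real.log (1 - (x - R)/(1 - 2*R)) - Real.log ((x - R)/(1 - 2*R))) / Real.log 2) *
        (((1 - r') * (1 - 2*R) - (x - R) * (-(2 * r'))) / (1 - 2*R)^2)) x := by
    have := (hasDerivAt_H hu0 hu1).comp x hu
    exact this
  have hcoef : HasDerivAt (fun y => 2 * (1 - 2 * r y)) (2 * (-(2 * r'))) x :=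
    hden.const_mul 2
  have hprod := hcoef.mul hHu
  have total := ((hH2r.add (hr'.const_mul 4)).add hprod).sub
    ((hasDerivAt_H h0 h1).const_mul 2)
  have hpsieq : psi = fun y =>
      H (2 * r y) + 4 * r y + 2 * (1 - 2 * r y) * H ((y - r y) / (1 - 2 * r y)) - 2 * H y :=
    rfl
  rw [hpsieq]
  refine total.congr_deriv (Eq.symm ?_)
  -- value identity
  have hlogu : Real.log ((x - R) / (1 - 2*R)) = Real.log (x - R) - Real.log (1 - 2*R) :=
    Real.log_div (ne_of_gt ha) (ne_of_gt hc)
  have h1u : 1 - (x - R) / (1 - 2*R) = (1 - x - R) / (1 - 2*R) := by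
    rw [one_sub_div (ne_of_gt hc)]; ring
  have hlog1u : Real.log (1 - (x - R) / (1 - 2*R)) =
      Real.log (1 - x - R) - Real.log (1 - 2*R) := by
    rw [h1u, Real.log_div (ne_of_gt hb) (ne_of_gt hc)]
  have hlog2R : Real.log (2 * R) = Real.log 2 + Real.log R :=
    Real.log_mul two_ne_zero (ne_of_gt hR0)
  have hkey : Real.log R =
      Real.log 2 + Real.log (x - R) + Real.log (1 - x - R) - Real.log (1 - 2*R) := by
    have e0 : 2 * ((x - R) * (1 - x - R)) = R * (1 - 2*R) := by linear_combination hq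
    have e1 : Real.log (2 * ((x - R) * (1 - x - R))) = Real.log (R * (1 - 2*R)) := by
      rw [e0]
    rw [Real.log_mul two_ne_zero (by positivity), Real.log_mul (ne_of_gt ha) (ne_of_gt hb),
      Real.log_mul (ne_of_gt hR0) (ne_of_gt hc)] at e1
    linarith
  have hs8 : (0:ℝ) < 3 - 8 * R := by linarith
  simp only [phi, H, Real.logb, ← hRdef]
  rw [hlogu, hlog1u, hlog2R, hkey, hr'def]
  field_simp
  ring

lemma hasDerivAt_phi {x : ℝ} (h0 : 0 < x) (h1 : x < 1) :
    HasDerivAt phi (-(16 / (Real.log 2 * (3 - 8 * r x) * (3 - 4 * r x)))) x := by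
  obtain ⟨hR0, hR4, hq, hRx, hRx1⟩ := r_facts h0 h1
  have hL : (0:ℝ) < Real.log 2 := Real.log_pos one_lt_two
  set R := r x with hRdef
  have ha : 0 < x - R := by linarith
  have hb : 0 < 1 - x - R := by linarith
  have hr' := hasDerivAt_r h0 h1
  rw [← hRdef] at hr'
  set r' := (2 - 4*x) / (3 - 8 * R) with hr'def
  have hfb : HasDerivAt (fun y => Real.log (1 - y - r y)) ((-1 - r') / (1 - x - R)) x := by
    have hin : HasDerivAt (fun y : ℝ => 1 - y - r y) (-1 - r') x :=
      (((hasDerivAt_id x).const_sub 1).sub hr')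
    exact hin.log (ne_of_gt hb)
  have hfa : HasDerivAt (fun y => Real.log (y - r y)) ((1 - r') / (x - R)) x :=
    ((hasDerivAt_id x).sub hr').log (ne_of_gt ha)
  have hf1x : HasDerivAt (fun y => Real.log (1 - y)) ((-1) / (1 - x)) x :=
    ((hasDerivAt_id x).const_sub 1).log (by linarith : (1:ℝ) - x ≠ 0)
  have hfx : HasDerivAt Real.log x⁻¹ x := Real.hasDerivAt_log (ne_of_gt h0)
  have total := (((hfb.sub hfa).sub hf1x).add hfx).const_mul (2 / Real.log 2)
  have hphieq : phi = fun y => 2 / Real.log 2 *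
      (Real.log (1 - y - r y) - Real.log (y - r y) - Real.log (1 - y) + Real.log y) := rfl
  rw [hphieq]
  refine total.congr_deriv (Eq.symm ?_)
  rw [hr'def]
  have hs8 : (0:ℝ) < 3 - 8 * R := by linarith
  have hs4 : (0:ℝ) < 3 - 4 * R := by linarith
  have h1x : (0:ℝ) < 1 - x := by linarith
  field_simp
  rw [neg_div', div_eq_iff (ne_of_gt (by linarith))]
  linear_combination (32*x^2*R - 16*x^2 - 32*x*R + 16*x - 16*R^2 + 22*R - 6) * hq

theorem stmt_16 :
    ∀ x : ℝ, 0 < x → x ≤ 1 / 2 →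
      deriv (deriv psi) x = -(16 / (Real.log 2 * (3 - 8 * r x) * (3 - 4 * r x))) ∧
        deriv (deriv psi) x < 0 := by
  intro x hx hx2
  have h1 : x < 1 := by linarith
  have hEq : deriv psi =ᶠ[nhds x] phi := by
    filter_upwards [isOpen_Ioo.mem_nhds (show x ∈ Set.Ioo (0:ℝ) 1 from ⟨hx, h1⟩)] with y hy
    exact (hasDerivAt_psi hy.1 hy.2).deriv
  have hd2 : deriv (deriv psi) x = deriv phi x := hEq.deriv_eq
  rw [hd2, (hasDerivAt_phi hx h1).deriv]
  refine ⟨rfl, ?_⟩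
  obtain ⟨hR0, hR4, -, -, -⟩ := r_facts hx h1
  have hL : (0:ℝ) < Real.log 2 := Real.log_pos one_lt_two
  have : (0:ℝ) < 16 / (Real.log 2 * (3 - 8 * r x) * (3 - 4 * r x)) := by
    apply div_pos (by norm_num)
    apply mul_pos (mul_pos hL (by linarith)) (by linarith)
  linarith
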